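/- Let p ≥ 1 and let a_j > 0, v_j > 0, w_j ≥ v_j + 1 for j = 1,…,p. Then for every t > 0 the series Σ_{ℓ=0}^∞ [Π_{j=1}^{p} Γ(v_j + a_j·ℓ)/Γ(w_j + a_j·ℓ)] · (−t)^ℓ/ℓ! converges absolutely and its sum is strictly positive. (This sum is the Wright generalized hypergeometric function ₚW_p[−t] with upper parameter pairs (v_j, a_j) and lower parameter pairs (w_j, a_j).) -/

import Mathlib

open MeasureTheory Real Set

noncomputable def rbeta (u s : ℝ) : ℝ :=
  ∫ x in Set.Ioc (0:ℝ) 1, x ^ (u-1) * (1-x) ^ (s-1)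

lemma rbeta_integrable {u s : ℝ} (hu : 0 < u) (hs : 1 ≤ s) :
    MeasureTheory.IntegrableOn (fun x : ℝ => x ^ (u-1) * (1-x) ^ (s-1)) (Set.Ioc 0 1) := by
  have h1 : MeasureTheory.IntegrableOn (fun x : ℝ => x ^ (u-1)) (Set.Ioc 0 1) := by
    have := intervalIntegral.intervalIntegrable_rpow' (a := 0) (b := 1)
      (show (-1:ℝ) < u-1 by linarith)
    rwa [intervalIntegrable_iff_integrableOn_Ioc_of_le zero_le_one] at this
  refine h1.mono' ?_ ?_
  · exact ((measurable_id.pow_const (u-1)).mul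
      ((measurable_const.sub measurable_id).pow_const (s-1))).aestronglyMeasurable
  · rw [ae_restrict_iff' measurableSet_Ioc]
    filter_upwards with x hx
    have hx0 : 0 < x := hx.1
    have h1x : 0 ≤ 1 - x := by linarith [hx.2]
    rw [Real.norm_eq_abs, abs_mul, abs_of_nonneg (Real.rpow_nonneg hx0.le _),
      abs_of_nonneg (Real.rpow_nonneg h1x _)]
    nth_rewrite 2 [← mul_one (x ^ (u-1))]
    exact mul_le_mul_of_nonneg_left
      (Real.rpow_le_one h1x (by linarith [hx0]) (by linarith)) (Real.rpow_nonneg hx0.le _)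

lemma rbeta_eq {u s : ℝ} (hu : 0 < u) (hs : 0 < s) :
    Real.Gamma u * Real.Gamma s = Real.Gamma (u+s) * rbeta u s := by
  have hc := Complex.Gamma_mul_Gamma_eq_betaIntegral
    (show 0 < (u:ℂ).re by simpa using hu) (show 0 < (s:ℂ).re by simpa using hs)
  have hbeta : Complex.betaIntegral (u:ℂ) (s:ℂ) = ((rbeta u s : ℝ) : ℂ) := by
    rw [Complex.betaIntegral]
    have heq : ∀ x ∈ Set.uIcc (0:ℝ) 1,
        (x:ℂ) ^ ((u:ℂ)-1) * ((1:ℂ)-(x:ℂ)) ^ ((s:ℂ)-1)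
          = ((x ^ (u-1) * (1-x) ^ (s-1) : ℝ) : ℂ) := by
      intro x hx
      rw [Set.uIcc_of_le zero_le_one] at hx
      have h1x : (0:ℝ) ≤ 1 - x := by linarith [hx.2]
      rw [Complex.ofReal_mul, Complex.ofReal_cpow hx.1, Complex.ofReal_cpow h1x]
      push_cast
      ring_nf
    rw [intervalIntegral.integral_congr heq, intervalIntegral.integral_ofReal,
      rbeta, ← intervalIntegral.integral_of_le zero_le_one]
  rw [hbeta, ← Complex.ofReal_add, Complex.Gamma_ofReal, Complex.Gamma_ofReal,
    Complex.Gamma_ofReal, ← Complex.ofReal_mul, ← Complex.ofReal_mul] at hc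
  exact_mod_cast hc

lemma rbeta_pos {u s : ℝ} (hu : 0 < u) (hs : 0 < s) : 0 < rbeta u s := by
  have h := rbeta_eq hu hs
  have h1 := Real.Gamma_pos_of_pos hu
  have h2 := Real.Gamma_pos_of_pos hs
  have h3 := Real.Gamma_pos_of_pos (by linarith : 0 < u + s)
  nlinarith [mul_pos h1 h2]

lemma Gamma_ratio {u s : ℝ} (hu : 0 < u) (hs : 0 < s) :
    Real.Gamma u / Real.Gamma (u+s) = rbeta u s / Real.Gamma s := by
  have h := rbeta_eq hu hs
  have h2 := (Real.Gamma_pos_of_pos hs).ne'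
  have h3 := (Real.Gamma_pos_of_pos (by linarith : 0 < u + s)).ne'
  field_simp
  linarith [h]

lemma rbeta_mono {u s y : ℝ} (hu : 0 < u) (hs : 1 ≤ s) (hy : 0 ≤ y) :
    rbeta (u+y) s ≤ rbeta u s := by
  refine setIntegral_mono_on (rbeta_integrable (by linarith) hs)
    (rbeta_integrable hu hs) measurableSet_Ioc ?_
  intro x hx
  have h1x : (0:ℝ) ≤ 1 - x := by linarith [hx.2]
  refine mul_le_mul_of_nonneg_right ?_ (Real.rpow_nonneg h1x _)
  exact Real.rpow_le_rpow_of_exponent_ge hx.1 hx.2 (by linarith)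


lemma abs_term (bl x : ℝ) (ℓ : ℕ) :
    |bl * (-x)^ℓ / (ℓ.factorial : ℝ)| = |bl| * (|x|^ℓ / (ℓ.factorial : ℝ)) := by
  rw [abs_div, abs_mul, abs_pow, abs_neg, abs_of_nonneg
    (by positivity : (0:ℝ) ≤ (ℓ.factorial : ℝ)), mul_div_assoc]

lemma term_bound {bl B x T : ℝ} (ℓ : ℕ) (hb : |bl| ≤ B) (hx : |x| ≤ T) :
    |bl * (-x)^ℓ / (ℓ.factorial : ℝ)| ≤ B * (T^ℓ / (ℓ.factorial : ℝ)) := by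
  rw [abs_term]
  have h1 : |x|^ℓ ≤ T^ℓ := pow_le_pow_left₀ (abs_nonneg x) hx ℓ
  refine mul_le_mul hb (div_le_div_of_nonneg_right ?_ ?_) (by positivity) (le_trans (abs_nonneg _) hb)
  · exact h1
  · positivity

lemma summable_aux {b : ℕ → ℝ} {B : ℝ} (hb : ∀ ℓ, |b ℓ| ≤ B) (u : ℝ) :
    Summable (fun ℓ : ℕ => b ℓ * (-u)^ℓ / (ℓ.factorial : ℝ)) := by
  refine Summable.of_norm_bounded (g := fun ℓ : ℕ => B * (|u|^ℓ / (ℓ.factorial : ℝ)))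
    ((Real.summable_pow_div_factorial |u|).mul_left B) ?_
  intro ℓ
  exact term_bound ℓ (hb ℓ) le_rfl

lemma exp_tsum (x : ℝ) : Real.exp x = ∑' ℓ : ℕ, x ^ ℓ / (ℓ.factorial : ℝ) := by
  rw [Real.exp_eq_exp_ℝ, NormedSpace.exp_eq_tsum_div]

lemma tsum_bound {b : ℕ → ℝ} {B T : ℝ} (hb : ∀ ℓ, |b ℓ| ≤ B) {u : ℝ} (hu : |u| ≤ T) :
    |∑' ℓ : ℕ, b ℓ * (-u)^ℓ / (ℓ.factorial : ℝ)| ≤ B * Real.exp T := by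
  have hsum : Summable (fun ℓ : ℕ => B * (T^ℓ / (ℓ.factorial : ℝ))) :=
    (Real.summable_pow_div_factorial T).mul_left B
  have hs : Summable (fun ℓ : ℕ => ‖b ℓ * (-u)^ℓ / (ℓ.factorial : ℝ)‖) := by
    refine hsum.of_nonneg_of_le (fun ℓ => norm_nonneg _) ?_
    intro ℓ
    exact term_bound ℓ (hb ℓ) hu
  have h1 : ‖∑' ℓ : ℕ, b ℓ * (-u)^ℓ / (ℓ.factorial : ℝ)‖
      ≤ ∑' ℓ : ℕ, ‖b ℓ * (-u)^ℓ / (ℓ.factorial : ℝ)‖ := norm_tsum_le_tsum_norm hs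
  have h2 : ∑' ℓ : ℕ, ‖b ℓ * (-u)^ℓ / (ℓ.factorial : ℝ)‖
      ≤ ∑' ℓ : ℕ, B * (T^ℓ / (ℓ.factorial : ℝ)) :=
    Summable.tsum_le_tsum (fun ℓ => term_bound ℓ (hb ℓ) hu) hs hsum
  rw [← Real.norm_eq_abs]
  refine (h1.trans h2).trans_eq ?_
  rw [tsum_mul_left, ← exp_tsum]

lemma contOn_aux {b : ℕ → ℝ} {B : ℝ} (hb : ∀ ℓ, |b ℓ| ≤ B) (T : ℝ) :
    ContinuousOn (fun u : ℝ => ∑' ℓ : ℕ, b ℓ * (-u)^ℓ / (ℓ.factorial : ℝ))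
      (Set.Icc (-T) T) := by
  refine continuousOn_tsum (f := fun ℓ u => b ℓ * (-u)^ℓ / (ℓ.factorial : ℝ))
    (fun ℓ => ((continuous_const.mul ((continuous_neg).pow ℓ)).div_const _).continuousOn)
    ((Real.summable_pow_div_factorial |T|).mul_left B) ?_
  intro ℓ u hu
  have h1 : |u| ≤ |T| := by
    rcases hu with ⟨h1, h2⟩
    rw [abs_le]
    exact ⟨le_trans (neg_le_neg (le_abs_self T)) h1, le_trans h2 (le_abs_self T)⟩
  exact term_bound ℓ (hb ℓ) h1

lemma ratio_mono {c s y : ℝ} (hc : 0 < c) (hs : 1 ≤ s) (hy : 0 ≤ y) :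
    Real.Gamma (c + y) / Real.Gamma ((c + s) + y) ≤ Real.Gamma c / Real.Gamma (c + s) := by
  have h1 : (c+s)+y = (c+y)+s := by ring
  rw [h1, Gamma_ratio (by linarith) (by linarith), Gamma_ratio hc (by linarith)]
  have := Real.Gamma_pos_of_pos (show (0:ℝ) < s by linarith)
  exact div_le_div_of_nonneg_right (rbeta_mono hc hs hy) this.le

lemma key (p : ℕ) (a v w : Fin p → ℝ)
    (ha : ∀ j, 0 < a j) (hv : ∀ j, 0 < v j) (hw : ∀ j, v j + 1 ≤ w j) :
    ∀ S : Finset (Fin p), ∀ u : ℝ, 0 ≤ u →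
      0 < ∑' ℓ : ℕ, (∏ j ∈ S, Real.Gamma (v j + a j * ℓ) / Real.Gamma (w j + a j * ℓ)) *
        (-u)^ℓ / (ℓ.factorial : ℝ) := by
  have hpos1 : ∀ (i : Fin p) (ℓ : ℕ), 0 < Real.Gamma (v i + a i * ℓ) := by
    intro i ℓ
    have h1 := hv i
    have h2 : 0 ≤ a i * ℓ := mul_nonneg (ha i).le (Nat.cast_nonneg ℓ)
    exact Real.Gamma_pos_of_pos (by linarith)
  have hpos2 : ∀ (i : Fin p) (ℓ : ℕ), 0 < Real.Gamma (w i + a i * ℓ) := by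
    intro i ℓ
    have h1 := hv i
    have h3 := hw i
    have h2 : 0 ≤ a i * ℓ := mul_nonneg (ha i).le (Nat.cast_nonneg ℓ)
    exact Real.Gamma_pos_of_pos (by linarith)
  have hrle : ∀ (i : Fin p) (ℓ : ℕ),
      Real.Gamma (v i + a i * ℓ) / Real.Gamma (w i + a i * ℓ)
        ≤ Real.Gamma (v i) / Real.Gamma (w i) := by
    intro i ℓ
    have h2 : 0 ≤ a i * ℓ := mul_nonneg (ha i).le (Nat.cast_nonneg ℓ)
    have hrw : w i + a i * ℓ = (v i + (w i - v i)) + a i * ℓ := by ring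
    have hrw2 : w i = v i + (w i - v i) := by ring
    rw [hrw]
    nth_rewrite 2 [hrw2]
    exact ratio_mono (hv i) (by have := hw i; linarith) h2
  intro S
  induction S using Finset.induction_on with
  | empty =>
    intro u hu
    simp only [Finset.prod_empty, one_mul]
    rw [← exp_tsum (-u)]
    exact Real.exp_pos _
  | @insert j S hj IH =>
    intro u hu
    -- notation
    set s : ℝ := w j - v j with hs_def
    have hs1 : 1 ≤ s := by have := hw j; simp only [hs_def]; linarith
    have hΓs : 0 < Real.Gamma s := Real.Gamma_pos_of_pos (by linarith)
    set b : ℕ → ℝ := fun ℓ : ℕ =>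
      ∏ i ∈ S, Real.Gamma (v i + a i * ℓ) / Real.Gamma (w i + a i * ℓ) with hb_def
    have hb_pos : ∀ ℓ, 0 < b ℓ := by
      intro ℓ
      exact Finset.prod_pos fun i _ => div_pos (hpos1 i ℓ) (hpos2 i ℓ)
    have hb_le : ∀ ℓ, b ℓ ≤ b 0 := by
      intro ℓ
      refine Finset.prod_le_prod (fun i _ => (div_pos (hpos1 i ℓ) (hpos2 i ℓ)).le) ?_
      intro i _
      refine (hrle i ℓ).trans_eq ?_
      norm_num
    have hb_abs : ∀ ℓ, |b ℓ| ≤ b 0 := fun ℓ => by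
      rw [abs_of_pos (hb_pos ℓ)]; exact hb_le ℓ
    set G : ℝ → ℝ := fun y : ℝ => ∑' ℓ : ℕ, b ℓ * (-y)^ℓ / (ℓ.factorial : ℝ) with hG_def
    have hGpos : ∀ y : ℝ, 0 ≤ y → 0 < G y := fun y hy => IH y hy
    -- the integrand family
    set f : ℕ → ℝ → ℝ := fun ℓ x =>
      x ^ (v j + a j * ℓ - 1) * (1-x) ^ (s-1) * (b ℓ * (-u)^ℓ / (ℓ.factorial : ℝ)) with hf_def
    have hvj : ∀ ℓ : ℕ, 0 < v j + a j * ℓ := fun ℓ => by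
      have := mul_nonneg (ha j).le (Nat.cast_nonneg ℓ); have := hv j; linarith
    have hint : ∀ ℓ, IntegrableOn (f ℓ) (Set.Ioc 0 1) := by
      intro ℓ
      have h := (rbeta_integrable (hvj ℓ) hs1).mul_const (b ℓ * (-u)^ℓ / (ℓ.factorial : ℝ))
      have : v j + a j * ℓ - 1 = (v j + a j * ℓ) - 1 := by ring
      simpa [hf_def, this, IntegrableOn] using h
    -- step 1 : each term is an integral
    have key1 : ∀ ℓ : ℕ,
        (∏ i ∈ insert j S, Real.Gamma (v i + a i * ℓ) / Real.Gamma (w i + a i * ℓ)) *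
          (-u)^ℓ / (ℓ.factorial : ℝ)
        = (Real.Gamma s)⁻¹ * ∫ x in Set.Ioc (0:ℝ) 1, f ℓ x := by
      intro ℓ
      rw [Finset.prod_insert hj]
      have hratio : Real.Gamma (v j + a j * ℓ) / Real.Gamma (w j + a j * ℓ)
          = rbeta (v j + a j * ℓ) s / Real.Gamma s := by
        have : w j + a j * ℓ = (v j + a j * ℓ) + s := by simp [hs_def]; ring
        rw [this, Gamma_ratio (hvj ℓ) (by linarith)]
      have hI : ∫ x in Set.Ioc (0:ℝ) 1, f ℓ x
          = rbeta (v j + a j * ℓ) s * (b ℓ * (-u)^ℓ / (ℓ.factorial : ℝ)) := by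
        rw [hf_def, rbeta]
        exact integral_mul_const _ _
      rw [hratio, hI]
      have hbl : b ℓ = ∏ x ∈ S, Real.Gamma (v x + a x * ℓ) / Real.Gamma (w x + a x * ℓ) := rfl
      rw [hbl]
      ring
    -- step 2 : swap tsum and integral
    have hsumnorm : Summable (fun ℓ : ℕ => ∫ x in Set.Ioc (0:ℝ) 1, ‖f ℓ x‖) := by
      have heval : ∀ ℓ : ℕ, ∫ x in Set.Ioc (0:ℝ) 1, ‖f ℓ x‖
          = rbeta (v j + a j * ℓ) s * |b ℓ * (-u)^ℓ / (ℓ.factorial : ℝ)| := by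
        intro ℓ
        rw [rbeta, ← integral_mul_const]
        refine setIntegral_congr_fun measurableSet_Ioc ?_
        intro x hx
        have h1x : (0:ℝ) ≤ 1 - x := by linarith [hx.2]
        simp only [hf_def, Real.norm_eq_abs, abs_mul]
        rw [abs_of_nonneg (Real.rpow_nonneg hx.1.le _),
          abs_of_nonneg (Real.rpow_nonneg h1x _)]
      refine Summable.of_nonneg_of_le
        (fun ℓ => integral_nonneg fun x => norm_nonneg _)
        (fun ℓ => ?_)
        (((Real.summable_pow_div_factorial u).mul_left (b 0)).mul_left (rbeta (v j) s))
      rw [heval ℓ, abs_term]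
      have h1 : rbeta (v j + a j * ℓ) s ≤ rbeta (v j) s :=
        rbeta_mono (hv j) hs1 (mul_nonneg (ha j).le (Nat.cast_nonneg ℓ))
      have h2 : |b ℓ| * (|u|^ℓ / (ℓ.factorial : ℝ)) ≤ b 0 * (u^ℓ / (ℓ.factorial : ℝ)) := by
        rw [abs_of_nonneg hu]
        exact mul_le_mul_of_nonneg_right (hb_abs ℓ) (by positivity)
      have h3 : 0 ≤ |b ℓ| * (|u|^ℓ / (ℓ.factorial : ℝ)) := by positivity
      calc rbeta (v j + a j * ℓ) s * (|b ℓ| * (|u|^ℓ / (ℓ.factorial : ℝ)))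
          ≤ rbeta (v j) s * (b 0 * (u^ℓ / (ℓ.factorial : ℝ))) :=
            mul_le_mul h1 h2 h3 (rbeta_pos (hv j) (by linarith)).le
        _ = rbeta (v j) s * (b 0 * (u^ℓ / (ℓ.factorial : ℝ))) := rfl
    have hswap : ∑' ℓ : ℕ, ∫ x in Set.Ioc (0:ℝ) 1, f ℓ x
        = ∫ x in Set.Ioc (0:ℝ) 1, ∑' ℓ : ℕ, f ℓ x :=
      integral_tsum_of_summable_integral_norm hint hsumnorm
    -- step 3 : identify the pointwise sum
    have key2 : ∀ x ∈ Set.Ioc (0:ℝ) 1, ∑' ℓ : ℕ, f ℓ x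
        = x ^ (v j - 1) * (1-x) ^ (s-1) * G (u * x ^ (a j)) := by
      intro x hx
      have hx0 : 0 < x := hx.1
      have hterm : ∀ ℓ : ℕ, f ℓ x = (x ^ (v j - 1) * (1-x) ^ (s-1)) *
          (b ℓ * (-(u * x ^ (a j)))^ℓ / (ℓ.factorial : ℝ)) := by
        intro ℓ
        have hpow : x ^ (v j + a j * ℓ - 1) = x ^ (v j - 1) * (x ^ (a j)) ^ ℓ := by
          rw [show v j + a j * (ℓ:ℝ) - 1 = (v j - 1) + a j * ℓ by ring,
            Real.rpow_add hx0, Real.rpow_mul hx0.le, Real.rpow_natCast]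
        have hneg : (-(u * x ^ (a j)))^ℓ = (-u)^ℓ * (x ^ (a j))^ℓ := by
          rw [show -(u * x ^ (a j)) = (-u) * (x ^ (a j)) by ring, mul_pow]
        rw [hf_def]
        simp only []
        rw [hpow, hneg]
        ring
      rw [tsum_congr hterm, tsum_mul_left, hG_def]
    -- step 4 : assemble
    have hmain : ∑' ℓ : ℕ,
        (∏ i ∈ insert j S, Real.Gamma (v i + a i * ℓ) / Real.Gamma (w i + a i * ℓ)) *
          (-u)^ℓ / (ℓ.factorial : ℝ)
        = (Real.Gamma s)⁻¹ * ∫ x in Set.Ioc (0:ℝ) 1,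
            x ^ (v j - 1) * (1-x) ^ (s-1) * G (u * x ^ (a j)) := by
      rw [tsum_congr key1, tsum_mul_left, hswap,
        setIntegral_congr_fun measurableSet_Ioc key2]
    rw [hmain]
    -- step 5 : positivity of the integral
    have hFcont : ContinuousOn
        (fun x : ℝ => x ^ (v j - 1) * (1-x) ^ (s-1) * G (u * x ^ (a j)))
        (Set.Ioc 0 1) := by
      have hC1 : ContinuousOn (fun x : ℝ => x ^ (v j - 1)) (Set.Ioc 0 1) :=
        continuousOn_id.rpow_const fun x hx => Or.inl (ne_of_gt hx.1)
      have hC2 : ContinuousOn (fun x : ℝ => (1-x) ^ (s-1)) (Set.Ioc 0 1) :=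
        (continuous_const.sub continuous_id).continuousOn.rpow_const
          fun x _ => Or.inr (by linarith)
      have hinner : ContinuousOn (fun x : ℝ => u * x ^ (a j)) (Set.Ioc 0 1) :=
        continuousOn_const.mul (continuousOn_id.rpow_const fun x hx => Or.inl (ne_of_gt hx.1))
      have hmaps : Set.MapsTo (fun x : ℝ => u * x ^ (a j)) (Set.Ioc 0 1)
          (Set.Icc (-u) u) := by
        intro x hx
        have h1 : 0 ≤ u * x ^ (a j) := mul_nonneg hu (Real.rpow_nonneg hx.1.le _)
        have h2 : x ^ (a j) ≤ 1 := Real.rpow_le_one hx.1.le hx.2 (ha j).le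
        have h3 : u * x ^ (a j) ≤ u := by nlinarith
        refine ⟨?_, ?_⟩
        · show -u ≤ u * x ^ (a j)
          linarith
        · show u * x ^ (a j) ≤ u
          exact h3
      have hGc : ContinuousOn G (Set.Icc (-u) u) := contOn_aux hb_abs u
      exact (hC1.mul hC2).mul (hGc.comp hinner hmaps)
    have hFint : IntegrableOn
        (fun x : ℝ => x ^ (v j - 1) * (1-x) ^ (s-1) * G (u * x ^ (a j)))
        (Set.Ioc 0 1) := by
      have hM : ∀ x ∈ Set.Ioc (0:ℝ) 1, |G (u * x ^ (a j))| ≤ b 0 * Real.exp u := by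
        intro x hx
        refine tsum_bound hb_abs ?_
        have h1 : 0 ≤ u * x ^ (a j) := mul_nonneg hu (Real.rpow_nonneg hx.1.le _)
        have h2 : x ^ (a j) ≤ 1 := Real.rpow_le_one hx.1.le hx.2 (ha j).le
        rw [abs_of_nonneg h1]
        calc u * x ^ (a j) ≤ u * 1 := mul_le_mul_of_nonneg_left h2 hu
          _ = u := mul_one u
      refine ((rbeta_integrable (hv j) hs1).mul_const (b 0 * Real.exp u)).mono'
        (hFcont.aestronglyMeasurable measurableSet_Ioc) ?_
      rw [ae_restrict_iff' measurableSet_Ioc]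
      filter_upwards with x hx
      have h1x : (0:ℝ) ≤ 1 - x := by linarith [hx.2]
      rw [Real.norm_eq_abs, abs_mul, abs_mul,
        abs_of_nonneg (Real.rpow_nonneg hx.1.le _),
        abs_of_nonneg (Real.rpow_nonneg h1x _), mul_assoc, mul_assoc]
      refine mul_le_mul_of_nonneg_left ?_ (Real.rpow_nonneg hx.1.le _)
      exact mul_le_mul_of_nonneg_left (hM x hx) (Real.rpow_nonneg h1x _)
    have hFnn : 0 ≤ᵐ[volume.restrict (Set.Ioc (0:ℝ) 1)]
        (fun x : ℝ => x ^ (v j - 1) * (1-x) ^ (s-1) * G (u * x ^ (a j))) := by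
      rw [Filter.EventuallyLE, ae_restrict_iff' measurableSet_Ioc]
      filter_upwards with x hx
      simp only [Pi.zero_apply]
      have h1x : (0:ℝ) ≤ 1 - x := by linarith [hx.2]
      have hg : 0 < G (u * x ^ (a j)) :=
        hGpos _ (mul_nonneg hu (Real.rpow_nonneg hx.1.le _))
      exact mul_nonneg (mul_nonneg (Real.rpow_nonneg hx.1.le _)
        (Real.rpow_nonneg h1x _)) hg.le
    have hIpos : 0 < ∫ x in Set.Ioc (0:ℝ) 1,
        x ^ (v j - 1) * (1-x) ^ (s-1) * G (u * x ^ (a j)) := by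
      rw [setIntegral_pos_iff_support_of_nonneg_ae hFnn hFint]
      refine lt_of_lt_of_le ?_ (measure_mono (show Set.Ioo (0:ℝ) 1 ⊆ _ from ?_))
      · rw [Real.volume_Ioo]
        norm_num
      · intro x hx
        have hx0 : 0 < x := hx.1
        have h1x : 0 < 1 - x := by linarith [hx.2]
        have hg : 0 < G (u * x ^ (a j)) :=
          hGpos _ (mul_nonneg hu (Real.rpow_nonneg hx0.le _))
        constructor
        · have : 0 < x ^ (v j - 1) * (1-x) ^ (s-1) * G (u * x ^ (a j)) := by
            have := Real.rpow_pos_of_pos hx0 (v j - 1)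
            have := Real.rpow_pos_of_pos h1x (s-1)
            positivity
          exact Function.mem_support.2 (ne_of_gt this)
        · exact ⟨hx0, hx.2.le⟩
    exact mul_pos (inv_pos.2 hΓs) hIpos

theorem stmt_18 (p : ℕ) (hp : 1 ≤ p) (a v w : Fin p → ℝ)
    (ha : ∀ j, 0 < a j) (hv : ∀ j, 0 < v j) (hw : ∀ j, v j + 1 ≤ w j)
    (t : ℝ) (ht : 0 < t) :
    Summable (fun ℓ : ℕ =>
      |(∏ j, Real.Gamma (v j + a j * ℓ) / Real.Gamma (w j + a j * ℓ)) *
        (-t) ^ ℓ / (Nat.factorial ℓ)|) ∧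
    0 < ∑' ℓ : ℕ,
      (∏ j, Real.Gamma (v j + a j * ℓ) / Real.Gamma (w j + a j * ℓ)) *
        (-t) ^ ℓ / (Nat.factorial ℓ) := by
  constructor
  · have hrle : ∀ (i : Fin p) (ℓ : ℕ),
        Real.Gamma (v i + a i * ℓ) / Real.Gamma (w i + a i * ℓ)
          ≤ Real.Gamma (v i) / Real.Gamma (w i) := by
      intro i ℓ
      have h2 : 0 ≤ a i * ℓ := mul_nonneg (ha i).le (Nat.cast_nonneg ℓ)
      have hrw : w i + a i * ℓ = (v i + (w i - v i)) + a i * ℓ := by ring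
      have hrw2 : w i = v i + (w i - v i) := by ring
      rw [hrw]
      nth_rewrite 2 [hrw2]
      exact ratio_mono (hv i) (by have := hw i; linarith) h2
    have hb_abs : ∀ ℓ : ℕ,
        |∏ j, Real.Gamma (v j + a j * ℓ) / Real.Gamma (w j + a j * ℓ)|
          ≤ ∏ j, Real.Gamma (v j) / Real.Gamma (w j) := by
      intro ℓ
      have hpos : ∀ (i : Fin p) (m : ℕ), 0 < Real.Gamma (v i + a i * m)
          ∧ 0 < Real.Gamma (w i + a i * m) := by
        intro i m
        have h1 := hv i
        have h3 := hw i
        have h2 : 0 ≤ a i * m := mul_nonneg (ha i).le (Nat.cast_nonneg m)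
        exact ⟨Real.Gamma_pos_of_pos (by linarith), Real.Gamma_pos_of_pos (by linarith)⟩
      rw [abs_of_pos (Finset.prod_pos fun i _ => div_pos (hpos i ℓ).1 (hpos i ℓ).2)]
      exact Finset.prod_le_prod (fun i _ => (div_pos (hpos i ℓ).1 (hpos i ℓ).2).le)
        (fun i _ => hrle i ℓ)
    exact (summable_aux hb_abs t).abs
  · exact key p a v w ha hv hw Finset.univ t ht.le
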